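/- arXiv:1805.07196 — 4 statements merged into one kernel-verified Lean document; each statement's English description precedes it below -/
import Mathlib

section
/- Let G be a PDES with event set Σ = Σc ∪ Σuc (controllable/uncontrollable) and Σ = Σo ∪ Σuo (observable/unobservable), and let L be a probabilistic language with L ⊆ L_G. Then there exists a probabilistic P-supervisor S_p such that L_{S_p/G} = L if and only if there exists a scaling-factor function K such that L_{K/G} = L. -/
open scoped BigOperators

noncomputable section

/-- Chain product: given step weights `w s σ` (interpreted as the conditional
probability of event `σ` after string `s`), `chainProd w pre rest` multiplies the
weights along `rest`, starting from the already-consumed prefix `pre`. -/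
def chainProd {E : Type*} (w : List E → E → ℝ) : List E → List E → ℝ
  | _, [] => 1
  | pre, σ :: rest => w pre σ * chainProd w (pre ++ [σ]) rest

/-- The (probabilistic) language generated by step weights `w`:
`langOf w [] = 1` and `langOf w (s ++ [σ]) = langOf w s * w s σ`. -/
def langOf {E : Type*} (w : List E → E → ℝ) : List E → ℝ := chainProd w []

/-- A probabilistic language over a finite event set `E`. -/
structure PLang (E : Type*) [Fintype E] where
  toFun : List E → ℝ
  nonneg : ∀ s, 0 ≤ toFun s
  le_one : ∀ s, toFun s ≤ 1
  eps : toFun [] = 1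
  step : ∀ s, (∑ σ : E, toFun (s ++ [σ])) ≤ toFun s

/-- `L1` is a probabilistic sublanguage of `L2`. -/
def PSub {E : Type*} (L1 L2 : List E → ℝ) : Prop :=
  (∀ s, 0 < L1 s → 0 < L2 s) ∧
  ∀ s, 0 < L1 s → ∀ σ : E, L1 (s ++ [σ]) / L1 s ≤ L2 (s ++ [σ]) / L2 s

/-- Intersection of probabilistic languages. -/
def pInter {E : Type*} (L1 L2 : List E → ℝ) : List E → ℝ :=
  langOf fun s σ => min (L1 (s ++ [σ]) / L1 s) (L2 (s ++ [σ]) / L2 s)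

/-- Natural projection erasing the events outside the observable set `So`. -/
def proj {E : Type*} [DecidableEq E] (So : Finset E) (s : List E) : List E :=
  s.filter fun σ => decide (σ ∈ So)

/-- A probabilistic discrete event system (probabilistic automaton). -/
structure PDES (X : Type*) (E : Type*) [Fintype E] where
  x0 : X
  trans : X → E → Option X
  prob : X → E → ℝ
  prob_nonneg : ∀ x σ, 0 ≤ prob x σ
  prob_le_one : ∀ x σ, prob x σ ≤ 1
  prob_pos_iff : ∀ x σ, 0 < prob x σ ↔ (trans x σ).isSome
  sum_le_one : ∀ x, (∑ σ : E, prob x σ) ≤ 1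

/-- Extension of the partial transition function to strings. -/
def PDES.transStar {X E : Type*} [Fintype E] (G : PDES X E) (s : List E) : Option X :=
  s.foldl (fun ox σ => ox.bind fun x => G.trans x σ) (some G.x0)

/-- Step weight of a PDES: `ρ(δ(x0,s),σ)` when `δ(x0,s)` is defined, `0` otherwise. -/
def PDES.w {X E : Type*} [Fintype E] (G : PDES X E) (s : List E) (σ : E) : ℝ :=
  (G.transStar s).elim 0 fun x => G.prob x σ

/-- The probabilistic language generated by a PDES. -/
def PDES.lang {X E : Type*} [Fintype E] (G : PDES X E) : List E → ℝ := langOf G.w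

/-- The set of control patterns: subsets of events containing every uncontrollable event. -/
def ControlPatterns {E : Type*} [Fintype E] [DecidableEq E] (Sc : Finset E) :
    Finset (Finset E) :=
  Finset.univ.filter fun θ => Scᶜ ⊆ θ

/-- `Sp` is a probabilistic P-supervisor for `G`: to every observation of a string in the
support of `L_G` it assigns a probability distribution on the control patterns. -/
def IsSupervisor {X E : Type*} [Fintype E] [DecidableEq E] (G : PDES X E)
    (Sc So : Finset E) (Sp : List E → Finset E → ℝ) : Prop :=
  ∀ s : List E, 0 < G.lang s →
    (∀ θ ∈ ControlPatterns Sc, 0 ≤ Sp (proj So s) θ) ∧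
    (∑ θ ∈ ControlPatterns Sc, Sp (proj So s) θ) = 1

/-- The controlled probabilistic language `L_{Sp/G}`. -/
def supLang {X E : Type*} [Fintype E] [DecidableEq E] (G : PDES X E)
    (Sc So : Finset E) (Sp : List E → Finset E → ℝ) : List E → ℝ :=
  langOf fun s σ =>
    G.w s σ * ∑ θ ∈ (ControlPatterns Sc).filter (fun θ => σ ∈ θ), Sp (proj So s) θ

/-- `K` is a scaling-factor function for `G`: on every observation of a string in the
support of `L_G` it takes values in `[0,1]` and equals `1` on uncontrollable events. -/
def IsScaling {X E : Type*} [Fintype E] [DecidableEq E] (G : PDES X E)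
    (Sc So : Finset E) (K : List E → E → ℝ) : Prop :=
  ∀ s : List E, 0 < G.lang s → ∀ σ : E,
    0 ≤ K (proj So s) σ ∧ K (proj So s) σ ≤ 1 ∧ (σ ∉ Sc → K (proj So s) σ = 1)

/-- The controlled probabilistic language `L_{K/G}`. -/
def kLang {X E : Type*} [Fintype E] [DecidableEq E] (G : PDES X E)
    (So : Finset E) (K : List E → E → ℝ) : List E → ℝ :=
  langOf fun s σ => G.w s σ * K (proj So s) σ

/-- Probabilistic controllability (language form). -/
def ProbControllable {E : Type*} (L M : List E → ℝ) (Sc : Finset E) : Prop :=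
  ∀ s : List E, 0 < L s → ∀ σ : E, σ ∉ Sc →
    L (s ++ [σ]) / L s = M (s ++ [σ]) / M s

/-- Probabilistic observability (language form). -/
def ProbObservable {E : Type*} [DecidableEq E] (L M : List E → ℝ)
    (Sc So : Finset E) : Prop :=
  ∀ s1 s2 : List E, 0 < L s1 → 0 < L s2 → proj So s1 = proj So s2 →
    ∀ σ ∈ Sc,
      (M (s1 ++ [σ]) / M s1) * (L (s2 ++ [σ]) / L s2) =
      (M (s2 ++ [σ]) / M s2) * (L (s1 ++ [σ]) / L s1)

/-- Probabilistic controllability (automata form). -/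
def AutControllable {X Q E : Type*} [Fintype E] (G : PDES X E) (H : PDES Q E)
    (Sc : Finset E) : Prop :=
  ∀ s : List E, 0 < H.lang s → ∀ x q,
    G.transStar s = some x → H.transStar s = some q →
    ∀ σ : E, σ ∉ Sc → H.prob q σ = G.prob x σ

/-- Probabilistic observability (automata form). -/
def AutObservable {X Q E : Type*} [Fintype E] [DecidableEq E] (G : PDES X E)
    (H : PDES Q E) (Sc So : Finset E) : Prop :=
  ∀ s1 s2 : List E, 0 < H.lang s1 → 0 < H.lang s2 → proj So s1 = proj So s2 →
    ∀ x1 q1 x2 q2,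
      G.transStar s1 = some x1 → H.transStar s1 = some q1 →
      G.transStar s2 = some x2 → H.transStar s2 = some q2 →
      ∀ σ ∈ Sc, G.prob x1 σ * H.prob q2 σ = G.prob x2 σ * H.prob q1 σ

/-- Reachability in the controllability-testing automaton `G_tc`.
States are pairs `(x,q)` (as `Sum.inl`) together with the special state `d` (`Sum.inr ()`). -/
inductive TcReach {X Q E : Type*} [Fintype E] (G : PDES X E) (H : PDES Q E)
    (Sc : Finset E) : (X × Q) ⊕ Unit → Prop
  | init : TcReach G H Sc (Sum.inl (G.x0, H.x0))
  | good (x q x' q' σ) : TcReach G H Sc (Sum.inl (x, q)) →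
      G.trans x σ = some x' → H.trans q σ = some q' →
      ((σ ∉ Sc ∧ G.prob x σ = H.prob q σ) ∨ σ ∈ Sc) →
      TcReach G H Sc (Sum.inl (x', q'))
  | bad (x q σ) : TcReach G H Sc (Sum.inl (x, q)) →
      σ ∉ Sc → G.prob x σ ≠ H.prob q σ →
      TcReach G H Sc (Sum.inr ())

/-- Reachability in the observability-testing automaton `G_to`.
States are 4-tuples `(x1,q1,x2,q2)` (as `Sum.inl`) together with the special state `d`. -/
inductive ToReach {X Q E : Type*} [Fintype E] (G : PDES X E) (H : PDES Q E)
    (Sc So : Finset E) : (X × Q × X × Q) ⊕ Unit → Prop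
  | init : ToReach G H Sc So (Sum.inl (G.x0, H.x0, G.x0, H.x0))
  | sync (x1 q1 x2 q2 x1' q1' x2' q2' σ) :
      ToReach G H Sc So (Sum.inl (x1, q1, x2, q2)) →
      G.trans x1 σ = some x1' → H.trans q1 σ = some q1' →
      G.trans x2 σ = some x2' → H.trans q2 σ = some q2' →
      (σ ∉ Sc ∨ (σ ∈ Sc ∧ G.prob x1 σ * H.prob q2 σ = G.prob x2 σ * H.prob q1 σ)) →
      ToReach G H Sc So (Sum.inl (x1', q1', x2', q2'))
  | bad (x1 q1 x2 q2 σ) :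
      ToReach G H Sc So (Sum.inl (x1, q1, x2, q2)) →
      σ ∈ Sc → G.prob x1 σ * H.prob q2 σ ≠ G.prob x2 σ * H.prob q1 σ →
      ToReach G H Sc So (Sum.inr ())
  | left (x1 q1 x2 q2 x1' q1' σ) :
      ToReach G H Sc So (Sum.inl (x1, q1, x2, q2)) → σ ∉ So →
      G.trans x1 σ = some x1' → H.trans q1 σ = some q1' →
      ToReach G H Sc So (Sum.inl (x1', q1', x2, q2))
  | right (x1 q1 x2 q2 x2' q2' σ) :
      ToReach G H Sc So (Sum.inl (x1, q1, x2, q2)) → σ ∉ So →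
      G.trans x2 σ = some x2' → H.trans q2 σ = some q2' →
      ToReach G H Sc So (Sum.inl (x1, q1, x2', q2'))

/-- `H` is a probabilistic subautomaton of `G`, as witnessed by the state inclusion `e`. -/
def SubautomatonVia {Q X E : Type*} [Fintype E] (H : PDES Q E) (G : PDES X E)
    (e : Q → X) : Prop :=
  Function.Injective e ∧ e H.x0 = G.x0 ∧
  ∀ q σ, H.prob q σ ≤ G.prob (e q) σ ∧
    ∀ q', H.trans q σ = some q' → G.trans (e q) σ = some (e q')

/-- The product of two PDESs. -/
def PDES.prod {X Q E : Type*} [Fintype E] (G : PDES X E) (H : PDES Q E) :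
    PDES (X × Q) E where
  x0 := (G.x0, H.x0)
  trans := fun p σ => (G.trans p.1 σ).bind fun x => (H.trans p.2 σ).map fun q => (x, q)
  prob := fun p σ => min (G.prob p.1 σ) (H.prob p.2 σ)
  prob_nonneg := fun p σ => le_min (G.prob_nonneg _ _) (H.prob_nonneg _ _)
  prob_le_one := fun p σ => le_trans (min_le_left _ _) (G.prob_le_one _ _)
  prob_pos_iff := by
    intro p σ
    rw [lt_min_iff, G.prob_pos_iff, H.prob_pos_iff]
    cases hG : G.trans p.1 σ <;> cases hH : H.trans p.2 σ <;> simp [hG, hH]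
  sum_le_one := fun p =>
    le_trans (Finset.sum_le_sum fun σ _ => min_le_left _ _) (G.sum_le_one p.1)

end

section Aux

variable {E : Type*}

lemma chainProd_append (w : List E → E → ℝ) :
    ∀ (l : List E) (pre : List E) (σ : E),
      chainProd w pre (l ++ [σ]) = chainProd w pre l * w (pre ++ l) σ := by
  intro l
  induction l with
  | nil => intro pre σ; simp [chainProd]
  | cons a l ih =>
      intro pre σ
      simp only [List.cons_append, chainProd, List.append_eq, ih, List.append_assoc,
        List.singleton_append, List.nil_append, mul_assoc]

lemma langOf_snoc (w : List E → E → ℝ) (s : List E) (σ : E) :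
    langOf w (s ++ [σ]) = langOf w s * w s σ := by
  simpa [langOf] using chainProd_append w s [] σ

lemma chainProd_pos (u v : List E → E → ℝ) (hv : ∀ s σ, 0 ≤ v s σ)
    (h : ∀ s σ, u s σ ≠ 0 → v s σ ≠ 0) :
    ∀ (l pre : List E), chainProd u pre l ≠ 0 → 0 < chainProd v pre l := by
  intro l
  induction l with
  | nil => intro pre _; simp [chainProd]
  | cons a l ih =>
      intro pre hne
      simp only [chainProd] at hne ⊢
      obtain ⟨h1, h2⟩ := mul_ne_zero_iff.1 hne
      exact mul_pos (lt_of_le_of_ne (hv pre a) (Ne.symm (h _ _ h1))) (ih _ h2)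

variable [Fintype E] [DecidableEq E]

lemma w_nonneg {X : Type*} (G : PDES X E) (s : List E) (σ : E) : 0 ≤ G.w s σ := by
  unfold PDES.w
  cases G.transStar s with
  | none => simp
  | some x => simpa using G.prob_nonneg x σ

lemma mem_CP {Sc θ : Finset E} : θ ∈ ControlPatterns Sc ↔ Scᶜ ⊆ θ := by
  simp [ControlPatterns]

lemma powerset_total (f : E → ℝ) (S : Finset E) :
    ∑ ψ ∈ S.powerset, ∏ σ ∈ S, (if σ ∈ ψ then f σ else 1 - f σ) = 1 := by
  induction S using Finset.induction_on with
  | empty => simp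
  | @insert a S ha ih =>
      rw [Finset.sum_powerset_insert ha]
      have h1 : ∀ ψ ∈ S.powerset, (∏ σ ∈ insert a S, (if σ ∈ ψ then f σ else 1 - f σ))
          = (1 - f a) * ∏ σ ∈ S, (if σ ∈ ψ then f σ else 1 - f σ) := by
        intro ψ hψ
        rw [Finset.prod_insert ha, if_neg (fun h => ha (Finset.mem_powerset.1 hψ h))]
      have h2 : ∀ ψ ∈ S.powerset,
          (∏ σ ∈ insert a S, (if σ ∈ insert a ψ then f σ else 1 - f σ))
          = f a * ∏ σ ∈ S, (if σ ∈ ψ then f σ else 1 - f σ) := by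
        intro ψ hψ
        rw [Finset.prod_insert ha, if_pos (Finset.mem_insert_self a ψ)]
        congr 1
        refine Finset.prod_congr rfl fun σ hσ => ?_
        have hne : σ ≠ a := fun h => ha (h ▸ hσ)
        simp [Finset.mem_insert, hne]
      rw [Finset.sum_congr rfl h1, Finset.sum_congr rfl h2, ← Finset.mul_sum,
        ← Finset.mul_sum, ih]
      ring

lemma powerset_marg (f : E → ℝ) (S : Finset E) {a : E} (haS : a ∈ S) :
    ∑ ψ ∈ S.powerset.filter (fun ψ => a ∈ ψ),
      ∏ σ ∈ S, (if σ ∈ ψ then f σ else 1 - f σ) = f a := by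
  have ha' : a ∉ S.erase a := Finset.notMem_erase a S
  have hins : insert a (S.erase a) = S := Finset.insert_erase haS
  have himg : S.powerset.filter (fun ψ => a ∈ ψ)
      = (S.erase a).powerset.image (insert a) := by
    ext ψ
    simp only [Finset.mem_filter, Finset.mem_powerset, Finset.mem_image]
    constructor
    · rintro ⟨hsub, hmem⟩
      exact ⟨ψ.erase a, Finset.erase_subset_erase a hsub, Finset.insert_erase hmem⟩
    · rintro ⟨t, ht, rfl⟩
      have : t ⊆ S.erase a := ht
      refine ⟨?_, Finset.mem_insert_self a t⟩
      rw [← hins]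
      exact Finset.insert_subset_insert a this
  rw [himg, Finset.sum_image]
  · have h2 : ∀ ψ ∈ (S.erase a).powerset,
        (∏ σ ∈ S, (if σ ∈ insert a ψ then f σ else 1 - f σ))
        = f a * ∏ σ ∈ S.erase a, (if σ ∈ ψ then f σ else 1 - f σ) := by
      intro ψ hψ
      calc (∏ σ ∈ S, (if σ ∈ insert a ψ then f σ else 1 - f σ))
          = ∏ σ ∈ insert a (S.erase a), (if σ ∈ insert a ψ then f σ else 1 - f σ) := by
            rw [hins]
        _ = f a * ∏ σ ∈ S.erase a, (if σ ∈ ψ then f σ else 1 - f σ) := by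
            rw [Finset.prod_insert ha', if_pos (Finset.mem_insert_self a ψ)]
            congr 1
            refine Finset.prod_congr rfl fun σ hσ => ?_
            have hne : σ ≠ a := Finset.ne_of_mem_erase hσ
            simp [Finset.mem_insert, hne]
    rw [Finset.sum_congr rfl h2, ← Finset.mul_sum, powerset_total f (S.erase a), mul_one]
  · intro x hx y hy hxy
    have hxa : a ∉ x := fun h => ha' (Finset.mem_powerset.1 hx h)
    have hya : a ∉ y := fun h => ha' (Finset.mem_powerset.1 hy h)
    rw [← Finset.erase_insert hxa, ← Finset.erase_insert hya, hxy]

lemma cp_reindex (Sc : Finset E) (F G : Finset E → ℝ) (t : Finset E → Prop)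
    [DecidablePred t]
    (hFG : ∀ ψ ⊆ Sc, F (ψ ∪ Scᶜ) = G ψ)
    (ht : ∀ ψ ⊆ Sc, (t (ψ ∪ Scᶜ) ↔ t ψ)) :
    ∑ θ ∈ (ControlPatterns Sc).filter (fun θ => t θ), F θ
      = ∑ ψ ∈ Sc.powerset.filter (fun ψ => t ψ), G ψ := by
  refine Finset.sum_nbij' (fun θ => θ ∩ Sc) (fun ψ => ψ ∪ Scᶜ) ?_ ?_ ?_ ?_ ?_
  · intro θ hθ
    obtain ⟨hθ1, hθ2⟩ := Finset.mem_filter.1 hθ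
    have hc : Scᶜ ⊆ θ := mem_CP.1 hθ1
    have heq : θ ∩ Sc ∪ Scᶜ = θ := by
      ext σ
      simp only [Finset.mem_union, Finset.mem_inter, Finset.mem_compl]
      constructor
      · rintro (⟨h, _⟩ | h)
        · exact h
        · exact hc (Finset.mem_compl.2 h)
      · intro h
        by_cases hσ : σ ∈ Sc
        · exact Or.inl ⟨h, hσ⟩
        · exact Or.inr hσ
    refine Finset.mem_filter.2 ⟨Finset.mem_powerset.2 Finset.inter_subset_right, ?_⟩
    exact (ht _ Finset.inter_subset_right).1 (by rw [heq]; exact hθ2)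
  · intro ψ hψ
    obtain ⟨hψ1, hψ2⟩ := Finset.mem_filter.1 hψ
    exact Finset.mem_filter.2 ⟨mem_CP.2 Finset.subset_union_right,
      (ht _ (Finset.mem_powerset.1 hψ1)).2 hψ2⟩
  · intro θ hθ
    have hc : Scᶜ ⊆ θ := mem_CP.1 (Finset.mem_filter.1 hθ).1
    ext σ
    simp only [Finset.mem_union, Finset.mem_inter, Finset.mem_compl]
    constructor
    · rintro (⟨h, _⟩ | h)
      · exact h
      · exact hc (Finset.mem_compl.2 h)
    · intro h
      by_cases hσ : σ ∈ Sc
      · exact Or.inl ⟨h, hσ⟩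
      · exact Or.inr hσ
  · intro ψ hψ
    have hsub : ψ ⊆ Sc := Finset.mem_powerset.1 (Finset.mem_filter.1 hψ).1
    ext σ
    simp only [Finset.mem_inter, Finset.mem_union, Finset.mem_compl]
    constructor
    · rintro ⟨h | h, hσ⟩
      · exact h
      · exact absurd hσ h
    · intro h
      exact ⟨Or.inl h, hsub h⟩
  · intro θ hθ
    obtain ⟨hθ1, _⟩ := Finset.mem_filter.1 hθ
    have hc : Scᶜ ⊆ θ := mem_CP.1 hθ1
    have heq : θ ∩ Sc ∪ Scᶜ = θ := by
      ext σ
      simp only [Finset.mem_union, Finset.mem_inter, Finset.mem_compl]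
      constructor
      · rintro (⟨h, _⟩ | h)
        · exact h
        · exact hc (Finset.mem_compl.2 h)
      · intro h
        by_cases hσ : σ ∈ Sc
        · exact Or.inl ⟨h, hσ⟩
        · exact Or.inr hσ
    rw [← hFG _ Finset.inter_subset_right, heq]

lemma prodpat_eq (Sc : Finset E) (f : E → ℝ) :
    ∀ ψ ⊆ Sc, (∏ σ ∈ Sc, (if σ ∈ ψ ∪ Scᶜ then f σ else 1 - f σ))
      = ∏ σ ∈ Sc, (if σ ∈ ψ then f σ else 1 - f σ) := by
  intro ψ hψ
  refine Finset.prod_congr rfl fun σ hσ => ?_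
  have : σ ∈ ψ ∪ Scᶜ ↔ σ ∈ ψ := by
    simp [Finset.mem_union, Finset.mem_compl, hσ]
  simp only [this]

lemma cp_total (Sc : Finset E) (f : E → ℝ) :
    ∑ θ ∈ ControlPatterns Sc, ∏ σ ∈ Sc, (if σ ∈ θ then f σ else 1 - f σ) = 1 := by
  have := cp_reindex Sc (fun θ => ∏ σ ∈ Sc, (if σ ∈ θ then f σ else 1 - f σ))
    (fun ψ => ∏ σ ∈ Sc, (if σ ∈ ψ then f σ else 1 - f σ)) (fun _ => True)
    (prodpat_eq Sc f) (fun _ _ => Iff.rfl)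
  simpa [powerset_total f Sc] using this

lemma cp_marg (Sc : Finset E) (f : E → ℝ) {σ0 : E} (h : σ0 ∈ Sc) :
    ∑ θ ∈ (ControlPatterns Sc).filter (fun θ => σ0 ∈ θ),
      ∏ σ ∈ Sc, (if σ ∈ θ then f σ else 1 - f σ) = f σ0 := by
  have ht : ∀ ψ ⊆ Sc, (σ0 ∈ ψ ∪ Scᶜ ↔ σ0 ∈ ψ) := by
    intro ψ _
    simp [Finset.mem_union, Finset.mem_compl, h]
  rw [cp_reindex Sc _ (fun ψ => ∏ σ ∈ Sc, (if σ ∈ ψ then f σ else 1 - f σ))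
    (fun θ => σ0 ∈ θ) (prodpat_eq Sc f) ht]
  exact powerset_marg f Sc h

end Aux

/-- there is a probabilistic P-supervisor achieving `L` iff there is a
scaling-factor function achieving `L`. -/
theorem supervisor_iff_scaling {X E : Type*} [Fintype E] [DecidableEq E]
    (G : PDES X E) (Sc So : Finset E) (L : PLang E)
    (hsub : PSub L.toFun G.lang) :
    (∃ Sp : List E → Finset E → ℝ,
        IsSupervisor G Sc So Sp ∧ supLang G Sc So Sp = L.toFun) ↔
    (∃ K : List E → E → ℝ,
        IsScaling G Sc So K ∧ kLang G So K = L.toFun) := by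
  constructor
  · rintro ⟨Sp, hSp, hEq⟩
    refine ⟨fun t σ => ∑ θ ∈ (ControlPatterns Sc).filter (fun θ => σ ∈ θ), Sp t θ, ?_, hEq⟩
    intro s hs σ
    obtain ⟨hnn, hsum⟩ := hSp s hs
    refine ⟨Finset.sum_nonneg fun θ hθ => hnn θ (Finset.mem_of_mem_filter θ hθ), ?_, ?_⟩
    · calc ∑ θ ∈ (ControlPatterns Sc).filter (fun θ => σ ∈ θ), Sp (proj So s) θ
          ≤ ∑ θ ∈ ControlPatterns Sc, Sp (proj So s) θ :=
            Finset.sum_le_sum_of_subset_of_nonneg (Finset.filter_subset _ _)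
              (fun θ hθ _ => hnn θ hθ)
        _ = 1 := hsum
    · intro hσ
      show (∑ θ ∈ (ControlPatterns Sc).filter (fun θ => σ ∈ θ), Sp (proj So s) θ) = 1
      rw [Finset.filter_true_of_mem (fun θ hθ => mem_CP.1 hθ (Finset.mem_compl.2 hσ)), hsum]
  · rintro ⟨K, hK, hEq⟩
    set Sp : List E → Finset E → ℝ :=
      fun t θ => ∏ σ ∈ Sc, (if σ ∈ θ then K t σ else 1 - K t σ) with hSpdef
    have hposK : ∀ s : List E, kLang G So K s ≠ 0 → 0 < G.lang s := by
      intro s hne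
      exact chainProd_pos (fun s σ => G.w s σ * K (proj So s) σ) G.w
        (w_nonneg G) (fun s σ h => left_ne_zero_of_mul h) s [] hne
    have hmain : supLang G Sc So Sp = kLang G So K := by
      funext s
      induction s using List.reverseRecOn with
      | nil => rfl
      | append_singleton s σ ih =>
          simp only [supLang, kLang] at ih ⊢
          rw [langOf_snoc, langOf_snoc, ih]
          by_cases hσ : σ ∈ Sc
          · rw [cp_marg Sc (fun σ' => K (proj So s) σ') hσ]
          · rw [Finset.filter_true_of_mem
              (fun θ hθ => mem_CP.1 hθ (Finset.mem_compl.2 hσ)), cp_total Sc]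
            by_cases h0 : langOf (fun s σ => G.w s σ * K (proj So s) σ) s * G.w s σ = 0
            · rcases mul_eq_zero.1 h0 with h | h <;> rw [h] <;> ring
            · obtain ⟨h1, h2⟩ := mul_ne_zero_iff.1 h0
              have hpos : 0 < G.lang s := hposK s h1
              rw [(hK s hpos σ).2.2 hσ]
    refine ⟨Sp, ?_, by rw [hmain, hEq]⟩
    intro s hs
    constructor
    · intro θ hθ
      refine Finset.prod_nonneg fun σ hσ => ?_
      obtain ⟨h0, h1, _⟩ := hK s hs σ
      split
      · exact h0
      · linarith
    · exact cp_total Sc _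
end

section
/- If L and M are probabilistic languages over Σ with L ⊆ M and L is probabilistic controllable w.r.t. M and Σc, then the support language supp(L) is controllable w.r.t. supp(M) and Σc in the ordinary (nonprobabilistic) sense: for every s ∈ supp(L) and σ ∈ Σuc, if sσ ∈ supp(M) then sσ ∈ supp(L). -/
open scoped BigOperators

/-- probabilistic controllability implies ordinary controllability
of the support languages. -/
theorem probControllable_supp_controllable {E : Type*} [Fintype E]
    (L M : PLang E) (Sc : Finset E)
    (hsub : PSub L.toFun M.toFun)
    (hc : ProbControllable L.toFun M.toFun Sc) :
    ∀ s : List E, 0 < L.toFun s → ∀ σ : E, σ ∉ Sc →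
      0 < M.toFun (s ++ [σ]) → 0 < L.toFun (s ++ [σ]) := by
  intro s hLs σ hσ hM
  have hMs : 0 < M.toFun s := hsub.1 s hLs
  have h := hc s hLs σ hσ
  have hratio : 0 < M.toFun (s ++ [σ]) / M.toFun s := div_pos hM hMs
  rw [← h] at hratio
  have := mul_pos hratio hLs
  rwa [div_mul_cancel₀ _ (ne_of_gt hLs)] at this
end

section
/- If L and M are probabilistic languages over Σ with L ⊆ M and L is probabilistic observable w.r.t. M, Σc and Σo, then the support language supp(L) is observable w.r.t. supp(M), Σc and Σo in the ordinary (nonprobabilistic) sense: for all s1, s2 ∈ supp(L) with P(s1) = P(s2) and every σ ∈ Σc, if s1σ ∈ supp(L) and s2σ ∈ supp(M) then s2σ ∈ supp(L). -/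
open scoped BigOperators

/-- probabilistic observability implies ordinary observability
of the support languages. -/
theorem probObservable_supp_observable {E : Type*} [Fintype E] [DecidableEq E]
    (L M : PLang E) (Sc So : Finset E)
    (hsub : PSub L.toFun M.toFun)
    (ho : ProbObservable L.toFun M.toFun Sc So) :
    ∀ s1 s2 : List E, 0 < L.toFun s1 → 0 < L.toFun s2 →
      proj So s1 = proj So s2 → ∀ σ ∈ Sc,
        0 < L.toFun (s1 ++ [σ]) → 0 < M.toFun (s2 ++ [σ]) →
        0 < L.toFun (s2 ++ [σ]) := by
  intro s1 s2 h1 h2 hproj σ hσ hL1σ hM2σ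
  have key := ho s1 s2 h1 h2 hproj σ hσ
  have hM1 : 0 < M.toFun s1 := hsub.1 s1 h1
  have hM2 : 0 < M.toFun s2 := hsub.1 s2 h2
  have hM1σ : 0 < M.toFun (s1 ++ [σ]) := hsub.1 _ hL1σ
  have hrhs : 0 < (M.toFun (s2 ++ [σ]) / M.toFun s2) *
      (L.toFun (s1 ++ [σ]) / L.toFun s1) :=
    mul_pos (div_pos hM2σ hM2) (div_pos hL1σ h1)
  rw [← key] at hrhs
  have hL2σ : L.toFun (s2 ++ [σ]) ≠ 0 := by
    intro h0
    rw [h0] at hrhs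
    simp at hrhs
  exact lt_of_le_of_ne (L.nonneg _) (Ne.symm hL2σ)
end

section
/- Let L, R and M be probabilistic languages over Σ with L ⊆ R ⊆ M. If R is probabilistic controllable w.r.t. M and Σc and probabilistic observable w.r.t. M, Σc and Σo, then supp(R) is a prefix-closed ordinary language satisfying supp(L) ⊆ supp(R) ⊆ supp(M) which is controllable w.r.t. supp(M) and Σc and observable w.r.t. supp(M), Σc and Σo; that is, R ∈ PCO(L) implies supp(R) ∈ CO(supp(L)). -/
open scoped BigOperators

/-- Prefix-closedness of supports of probabilistic languages. -/
theorem PLang.prefix_pos {E : Type*} [Fintype E] (P : PLang E) :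
    ∀ s t : List E, 0 < P.toFun (s ++ t) → 0 < P.toFun s := by
  have key : ∀ t s : List E, P.toFun s = 0 → P.toFun (s ++ t) = 0 := by
    intro t
    induction t with
    | nil => intro s h; simpa using h
    | cons σ rest ih =>
        intro s h
        have hsum := P.step s
        rw [h] at hsum
        have hz : P.toFun (s ++ [σ]) = 0 := by
          have hmem : (σ : E) ∈ (Finset.univ : Finset E) := Finset.mem_univ σ
          nlinarith [Finset.single_le_sum (f := fun τ => P.toFun (s ++ [τ]))
            (fun τ _ => P.nonneg (s ++ [τ])) hmem, P.nonneg (s ++ [σ])]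
        have := ih (s ++ [σ]) hz
        simpa using this
  intro s t h
  rcases (P.nonneg s).lt_or_eq with h' | h'
  · exact h'
  · exact absurd (key t s h'.symm) (ne_of_gt h)

/-- `R ∈ PCO(L)` implies `supp(R) ∈ CO(supp(L))`: the support of a
probabilistic controllable and observable superlanguage is a prefix-closed ordinary
language between `supp(L)` and `supp(M)` that is controllable and observable. -/
theorem pco_mem_supp_co {E : Type*} [Fintype E] [DecidableEq E]
    (L R M : PLang E) (Sc So : Finset E)
    (hLR : PSub L.toFun R.toFun) (hRM : PSub R.toFun M.toFun)
    (hc : ProbControllable R.toFun M.toFun Sc)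
    (ho : ProbObservable R.toFun M.toFun Sc So) :
    (∀ s t : List E, 0 < R.toFun (s ++ t) → 0 < R.toFun s) ∧
    (∀ s : List E, 0 < L.toFun s → 0 < R.toFun s) ∧
    (∀ s : List E, 0 < R.toFun s → 0 < M.toFun s) ∧
    (∀ s : List E, 0 < R.toFun s → ∀ σ : E, σ ∉ Sc →
        0 < M.toFun (s ++ [σ]) → 0 < R.toFun (s ++ [σ])) ∧
    (∀ s1 s2 : List E, 0 < R.toFun s1 → 0 < R.toFun s2 →
        proj So s1 = proj So s2 → ∀ σ ∈ Sc,
          0 < R.toFun (s1 ++ [σ]) → 0 < M.toFun (s2 ++ [σ]) →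
          0 < R.toFun (s2 ++ [σ])) := by
  refine ⟨R.prefix_pos, hLR.1, hRM.1, ?_, ?_⟩
  · intro s hRs σ hσ hM
    have hMs : 0 < M.toFun s := hRM.1 s hRs
    have h := hc s hRs σ hσ
    have : 0 < R.toFun (s ++ [σ]) / R.toFun s := by
      rw [h]; positivity
    have := mul_pos this hRs
    rwa [div_mul_cancel₀ _ (ne_of_gt hRs)] at this
  · intro s1 s2 h1 h2 hp σ hσ hR1 hM2
    have hM1s : 0 < M.toFun s1 := hRM.1 s1 h1
    have hM2s : 0 < M.toFun s2 := hRM.1 s2 h2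
    have h := ho s1 s2 h1 h2 hp σ hσ
    -- M(s1σ) > 0 since R(s1σ) > 0 and M(s1σ)/Ms1 ≥ R(s1σ)/Rs1 > 0
    have hM1 : 0 < M.toFun (s1 ++ [σ]) := by
      have hle := hRM.2 s1 h1 σ
      have : 0 < M.toFun (s1 ++ [σ]) / M.toFun s1 :=
        lt_of_lt_of_le (by positivity) hle
      have := mul_pos this hM1s
      rwa [div_mul_cancel₀ _ (ne_of_gt hM1s)] at this
    have hrhs : 0 < (M.toFun (s2 ++ [σ]) / M.toFun s2) *
        (R.toFun (s1 ++ [σ]) / R.toFun s1) := by positivity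
    rw [← h] at hrhs
    have hR2 : R.toFun (s2 ++ [σ]) / R.toFun s2 ≠ 0 := by
      intro hz
      rw [hz, mul_zero] at hrhs
      exact lt_irrefl 0 hrhs
    have : 0 < R.toFun (s2 ++ [σ]) / R.toFun s2 :=
      lt_of_le_of_ne (div_nonneg (R.nonneg _) (R.nonneg _)) (Ne.symm hR2)
    have := mul_pos this h2
    rwa [div_mul_cancel₀ _ (ne_of_gt h2)] at this
end
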